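/- Let X be a real Banach space and F a Banach lattice with property (d): for every disjoint w*-null sequence (f_n) in F′ and every x ≥ 0 in F one has sup{ f_n(w) : |w| ≤ x } → 0. Then every semi-compact operator T : X → F is almost limited: ‖T′ f_n‖ → 0 for every disjoint w*-null sequence (f_n) in F′. -/

import Mathlib

open Filter Topology

/-- Two continuous functionals `f, g` on a Banach lattice are disjoint
(`|f| ⊓ |g| = 0` in the dual lattice). -/
def DualDisjoint {F : Type*} [NormedAddCommGroup F] [Lattice F] [IsOrderedAddMonoid F] [HasSolidNorm F] [NormedSpace ℝ F]
    (f g : F →L[ℝ] ℝ) : Prop :=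
  ∀ y : F, 0 ≤ y → ∀ ε : ℝ, 0 < ε → ∃ u v : F, 0 ≤ u ∧ 0 ≤ v ∧ u + v = y ∧
    (∀ w : F, |w| ≤ u → |f w| ≤ ε) ∧ (∀ z : F, |z| ≤ v → |g z| ≤ ε)

/-- Truncation identity in a lattice ordered group. -/
lemma trunc_add_pospart {F : Type*} [Lattice F] [AddCommGroup F]
    [CovariantClass F F (· + ·) (· ≤ ·)] (b u : F) :
    b ⊓ u + ((b - u) ⊔ 0) = b := by
  have h : (b - u) ⊔ 0 = b ⊔ u - u := by
    rw [sup_sub, sub_self]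
  rw [h, ← add_sub_assoc, inf_add_sup, add_sub_cancel_right]

/-- If `F` is a Banach lattice with property (d), then every
semi-compact operator `T : X → F` from a Banach space `X` is almost limited:
`‖T′ f_n‖ → 0` for every disjoint w*-null sequence `(f_n)` in `F′`. -/
theorem semi_compact_implies_almost_limited
    {X : Type*} [NormedAddCommGroup X] [NormedSpace ℝ X] [CompleteSpace X]
    {F : Type*} [NormedAddCommGroup F] [Lattice F] [IsOrderedAddMonoid F] [HasSolidNorm F] [NormedSpace ℝ F] [CompleteSpace F]
    -- property (d) of F
    (hd : ∀ f : ℕ → F →L[ℝ] ℝ,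
      (∀ n m, n ≠ m → DualDisjoint (f n) (f m)) →
      (∀ y : F, Tendsto (fun n => f n y) atTop (𝓝 0)) →
      ∀ y : F, 0 ≤ y →
        Tendsto (fun n => sSup {r : ℝ | ∃ w : F, |w| ≤ y ∧ r = f n w}) atTop (𝓝 0))
    (T : X →L[ℝ] F)
    -- T is semi-compact
    (hsc : ∀ ε : ℝ, 0 < ε → ∃ u : F, 0 ≤ u ∧
      ∀ x : X, ‖x‖ ≤ 1 → ‖(|T x| - u) ⊔ 0‖ ≤ ε) :
    ∀ f : ℕ → F →L[ℝ] ℝ,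
      (∀ n m, n ≠ m → DualDisjoint (f n) (f m)) →
      (∀ y : F, Tendsto (fun n => f n y) atTop (𝓝 0)) →
      Tendsto (fun n => ‖(f n).comp T‖) atTop (𝓝 0) := by
  intro f hdisj hw
  -- uniform bound on ‖f n‖ by Banach–Steinhaus
  obtain ⟨M, hM⟩ : ∃ M, ∀ n, ‖f n‖ ≤ M := by
    apply banach_steinhaus
    intro y
    have : Tendsto (fun n => ‖f n y‖) atTop (𝓝 ‖(0 : ℝ)‖) := (hw y).norm
    obtain ⟨C, hC⟩ := this.bddAbove_range
    exact ⟨C, fun n => hC ⟨n, rfl⟩⟩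
  have hM0 : 0 ≤ M := le_trans (norm_nonneg _) (hM 0)
  rw [Metric.tendsto_atTop]
  intro δ hδ
  set ε : ℝ := δ / (8 * (M + 1)) with hε
  have hεpos : 0 < ε := by positivity
  obtain ⟨u, hu, hb⟩ := hsc ε hεpos
  -- the suprema S n
  set S : ℕ → ℝ := fun n => sSup {r : ℝ | ∃ w : F, |w| ≤ u ∧ r = f n w} with hS
  have hSbdd : ∀ n, BddAbove {r : ℝ | ∃ w : F, |w| ≤ u ∧ r = f n w} := by
    intro n
    refine ⟨‖f n‖ * ‖u‖, ?_⟩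
    rintro r ⟨w, hwu, rfl⟩
    have hwn : ‖w‖ ≤ ‖u‖ := by
      apply norm_le_norm_of_abs_le_abs
      rwa [abs_of_nonneg hu]
    calc f n w ≤ |f n w| := le_abs_self _
      _ = ‖f n w‖ := rfl
      _ ≤ ‖f n‖ * ‖w‖ := (f n).le_opNorm w
      _ ≤ ‖f n‖ * ‖u‖ := mul_le_mul_of_nonneg_left hwn (norm_nonneg _)
  have hmem : ∀ n (w : F), |w| ≤ u → f n w ≤ S n := by
    intro n w hwu
    exact le_csSup (hSbdd n) ⟨w, hwu, rfl⟩
  have hS0 : ∀ n, 0 ≤ S n := by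
    intro n
    calc (0 : ℝ) = f n 0 := by simp
      _ ≤ S n := hmem n 0 (by simpa using hu)
  -- key pointwise bound: ‖(f n).comp T‖ ≤ S n + M * (2 * ε)
  have hkey : ∀ n, ‖(f n).comp T‖ ≤ S n + M * (2 * ε) := by
    intro n
    have hC0 : 0 ≤ S n + M * (2 * ε) := add_nonneg (hS0 n) (by positivity)
    -- bound on the unit ball
    have hball : ∀ x : X, ‖x‖ ≤ 1 → |f n (T x)| ≤ S n + M * (2 * ε) := by
      intro x hx
      set a : F := T x with ha
      have hab : ‖(|a| - u) ⊔ 0‖ ≤ ε := hb x hx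
      set w : F := a⁺ ⊓ u - a⁻ ⊓ u with hwdef
      set r : F := ((a⁺ - u) ⊔ 0) - ((a⁻ - u) ⊔ 0) with hrdef
      have hdecomp : a = w + r := by
        have h1 := trunc_add_pospart a⁺ u
        have h2 := trunc_add_pospart a⁻ u
        have h3 : w + r = (a⁺ ⊓ u + ((a⁺ - u) ⊔ 0)) - (a⁻ ⊓ u + ((a⁻ - u) ⊔ 0)) := by
          rw [hwdef, hrdef]; abel
        rw [h3, h1, h2]
        exact (posPart_sub_negPart a).symm
      -- |w| ≤ u
      have hwle : |w| ≤ u := by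
        have h1 : a⁺ ⊓ u ≤ u := inf_le_right
        have h2 : a⁻ ⊓ u ≤ u := inf_le_right
        have h3 : (0:F) ≤ a⁺ ⊓ u := le_inf (posPart_nonneg a) hu
        have h4 : (0:F) ≤ a⁻ ⊓ u := le_inf (negPart_nonneg a) hu
        rw [abs_le']
        constructor
        · calc w = a⁺ ⊓ u - a⁻ ⊓ u := rfl
            _ ≤ a⁺ ⊓ u := sub_le_self _ h4
            _ ≤ u := h1
        · calc -w = a⁻ ⊓ u - a⁺ ⊓ u := by rw [hwdef]; abel
            _ ≤ a⁻ ⊓ u := sub_le_self _ h3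
            _ ≤ u := h2
      -- ‖r‖ ≤ 2ε
      have hrn : ‖r‖ ≤ 2 * ε := by
        have hple : a⁺ ≤ |a| := by
          calc a⁺ ≤ a⁺ + a⁻ := le_add_of_nonneg_right (negPart_nonneg a)
            _ = |a| := posPart_add_negPart a
        have hnle : a⁻ ≤ |a| := by
          calc a⁻ ≤ a⁺ + a⁻ := le_add_of_nonneg_left (posPart_nonneg a)
            _ = |a| := posPart_add_negPart a
        have hb0 : (0:F) ≤ (|a| - u) ⊔ 0 := le_sup_right
        have key : ∀ c : F, c ≤ |a| → ‖(c - u) ⊔ 0‖ ≤ ε := by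
          intro c hc
          refine le_trans ?_ hab
          apply norm_le_norm_of_abs_le_abs
          rw [abs_of_nonneg (le_sup_right : (0:F) ≤ (c - u) ⊔ 0), abs_of_nonneg hb0]
          exact sup_le_sup_right (sub_le_sub_right hc u) 0
        calc ‖r‖ ≤ ‖(a⁺ - u) ⊔ 0‖ + ‖(a⁻ - u) ⊔ 0‖ := norm_sub_le _ _
          _ ≤ ε + ε := add_le_add (key _ hple) (key _ hnle)
          _ = 2 * ε := by ring
      -- combine
      have hfw : |f n w| ≤ S n := by
        rw [abs_le]
        refine ⟨?_, hmem n w hwle⟩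
        have : f n (-w) ≤ S n := hmem n (-w) (by rwa [abs_neg])
        rw [map_neg] at this
        linarith
      have hfr : |f n r| ≤ M * (2 * ε) := by
        calc |f n r| = ‖f n r‖ := rfl
          _ ≤ ‖f n‖ * ‖r‖ := (f n).le_opNorm r
          _ ≤ M * (2 * ε) := mul_le_mul (hM n) hrn (norm_nonneg _) hM0
      calc |f n (T x)| = |f n (w + r)| := by rw [← ha, hdecomp]
        _ = |f n w + f n r| := by rw [map_add]
        _ ≤ |f n w| + |f n r| := abs_add_le _ _
        _ ≤ S n + M * (2 * ε) := add_le_add hfw hfr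
    -- conclude the operator norm bound
    apply ContinuousLinearMap.opNorm_le_bound' _ hC0
    intro x hx0
    have hc : ‖x‖ ≠ 0 := hx0
    set x' : X := ‖x‖⁻¹ • x with hx'
    have hx'1 : ‖x'‖ ≤ 1 := by
      rw [hx', norm_smul, norm_inv, norm_norm, inv_mul_cancel₀ hc]
    have hfx : f n (T x) = ‖x‖ * f n (T x') := by
      rw [hx', map_smul, map_smul, smul_eq_mul, ← mul_assoc,
        mul_inv_cancel₀ hc, one_mul]
    calc ‖(f n).comp T x‖ = |f n (T x)| := rfl
      _ = ‖x‖ * |f n (T x')| := by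
          rw [hfx, abs_mul, abs_of_nonneg (norm_nonneg x)]
      _ ≤ ‖x‖ * (S n + M * (2 * ε)) :=
          mul_le_mul_of_nonneg_left (hball x' hx'1) (norm_nonneg x)
      _ = (S n + M * (2 * ε)) * ‖x‖ := mul_comm _ _
  -- the second term is at most δ/2
  have hMε : M * (2 * ε) ≤ δ / 2 := by
    have h1 : M * (2 * ε) ≤ (M + 1) * (2 * ε) := by nlinarith [hεpos.le]
    have h2 : (M + 1) * (2 * ε) = δ / 4 := by
      rw [hε]; field_simp; ring
    linarith
  -- use property (d)
  obtain ⟨N, hN⟩ := (Metric.tendsto_atTop.1 (hd f hdisj hw u hu)) (δ / 2) (by linarith)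
  refine ⟨N, fun n hn => ?_⟩
  have hSn : S n < δ / 2 := by
    have := hN n hn
    rw [Real.dist_eq, sub_zero] at this
    exact (le_abs_self _).trans_lt this
  rw [Real.dist_eq, sub_zero, abs_of_nonneg (norm_nonneg _)]
  calc ‖(f n).comp T‖ ≤ S n + M * (2 * ε) := hkey n
    _ < δ / 2 + δ / 2 := by linarith
    _ = δ := by ring
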